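/- Let n ≥ 2. Define μ₀ : ℂⁿ ⊕ ℂⁿ → End(ℂⁿ ⊕ ℂⁿ) by μ₀(α,β) = the block matrix [[(1/2)(αα* − ββ*)₀, (αβ*)₀],[(βα*)₀, (1/2)(ββ* − αα*)₀]]. Then there exists a constant c > 0 such that ‖μ₀(Ψ)‖ ≥ c·‖Ψ‖² for all Ψ ∈ ℂⁿ ⊕ ℂⁿ, where ‖μ₀(Ψ)‖ is the Frobenius (Hilbert–Schmidt) norm. -/

import Mathlib

open Matrix BigOperators

/-- The rank-one endomorphism `vw* : ξ ↦ ⟨w,ξ⟩·v` of `ℂⁿ` as a matrix. -/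
def outerPr {n : ℕ} (v w : Fin n → ℂ) : Matrix (Fin n) (Fin n) ℂ :=
  Matrix.vecMulVec v (star w)

/-- Trace-free part `(A)₀ = A − (1/n)·tr(A)·I`. -/
noncomputable def traceFree {n : ℕ} (A : Matrix (Fin n) (Fin n) ℂ) :
    Matrix (Fin n) (Fin n) ℂ :=
  A - ((1 / (n : ℂ)) * A.trace) • (1 : Matrix (Fin n) (Fin n) ℂ)

/-- Frobenius (Hilbert–Schmidt) norm `‖A‖ = √(∑ᵢⱼ |Aᵢⱼ|²) = √(tr(A*A))`. -/
noncomputable def frobNorm {m : Type*} [Fintype m] (A : Matrix m m ℂ) : ℝ :=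
  Real.sqrt (∑ i, ∑ j, ‖A i j‖ ^ 2)

/-- The quadratic map `μ₀(α,β)` as a block matrix. -/
noncomputable def mu0 {n : ℕ} (α β : Fin n → ℂ) :
    Matrix (Fin n ⊕ Fin n) (Fin n ⊕ Fin n) ℂ :=
  Matrix.fromBlocks
    (((1 : ℂ)/2) • traceFree (outerPr α α - outerPr β β))
    (traceFree (outerPr α β))
    (traceFree (outerPr β α))
    (((1 : ℂ)/2) • traceFree (outerPr β β - outerPr α α))

open Complex Finset

lemma frobSq_traceFree {n : ℕ} (hn : 0 < n) (A : Matrix (Fin n) (Fin n) ℂ) :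
    ∑ i, ∑ j, normSq (traceFree A i j)
      = (∑ i, ∑ j, normSq (A i j)) - normSq A.trace / n := by
  have hne : (n : ℝ) ≠ 0 := Nat.cast_ne_zero.mpr hn.ne'
  set lam : ℂ := (1 / (n : ℂ)) * A.trace with hlam
  have h1 : ∀ i j : Fin n, normSq (traceFree A i j)
      = normSq (A i j) + normSq (lam * (1 : Matrix (Fin n) (Fin n) ℂ) i j)
        - 2 * (A i j * (starRingEnd ℂ) (lam * (1 : Matrix (Fin n) (Fin n) ℂ) i j)).re := by
    intro i j
    rw [show traceFree A i j = A i j - lam * (1 : Matrix (Fin n) (Fin n) ℂ) i j from by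
      simp only [traceFree, Matrix.sub_apply, Matrix.smul_apply, smul_eq_mul, hlam],
      Complex.normSq_sub]
  simp only [h1, Finset.sum_sub_distrib, Finset.sum_add_distrib]
  have h2 : ∑ i : Fin n, ∑ j : Fin n, normSq (lam * (1 : Matrix (Fin n) (Fin n) ℂ) i j)
      = n * normSq lam := by
    simp [Matrix.one_apply, apply_ite, Finset.sum_ite_eq', mul_comm]
  have h3 : ∑ i : Fin n, ∑ j : Fin n,
      (A i j * (starRingEnd ℂ) (lam * (1 : Matrix (Fin n) (Fin n) ℂ) i j)).re
      = (A.trace * (starRingEnd ℂ) lam).re := by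
    have : ∑ i : Fin n, ∑ j : Fin n,
        (A i j * (starRingEnd ℂ) (lam * (1 : Matrix (Fin n) (Fin n) ℂ) i j))
        = A.trace * (starRingEnd ℂ) lam := by
      simp [Matrix.one_apply, mul_ite, apply_ite (starRingEnd ℂ), Finset.sum_ite_eq',
        Matrix.trace, Matrix.diag, Finset.sum_mul]
    rw [← this]
    simp [Complex.re_sum]
  simp only [← Finset.mul_sum]
  rw [h2, h3]
  have h4 : normSq lam = normSq A.trace / (n : ℝ) ^ 2 := by
    rw [hlam, Complex.normSq_mul]
    simp [Complex.normSq_div, div_pow]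
    ring
  have h5 : (A.trace * (starRingEnd ℂ) lam).re = normSq A.trace / n := by
    rw [hlam, _root_.map_mul, show (starRingEnd ℂ) (1 / (n : ℂ)) = 1 / (n : ℂ) by simp,
      show A.trace * (1 / (n : ℂ) * (starRingEnd ℂ) A.trace)
        = (normSq A.trace : ℂ) * (1 / (n : ℂ)) by rw [← Complex.mul_conj]; ring]
    simp [Complex.div_re, Complex.normSq_natCast, div_eq_mul_inv]
    left
    field_simp
  rw [h4, h5]
  field_simp
  ring

lemma frobSq_fromBlocks {n : ℕ} (A B C D : Matrix (Fin n) (Fin n) ℂ) :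
    ∑ i, ∑ j, normSq (Matrix.fromBlocks A B C D i j)
      = (∑ i, ∑ j, normSq (A i j)) + (∑ i, ∑ j, normSq (B i j))
        + (∑ i, ∑ j, normSq (C i j)) + (∑ i, ∑ j, normSq (D i j)) := by
  rw [Fintype.sum_sum_type]
  simp only [Fintype.sum_sum_type, fromBlocks_apply₁₁, fromBlocks_apply₁₂,
    fromBlocks_apply₂₁, fromBlocks_apply₂₂, Finset.sum_add_distrib]
  ring

lemma outerPr_apply {n : ℕ} (v w : Fin n → ℂ) (i j : Fin n) :
    outerPr v w i j = v i * (starRingEnd ℂ) (w j) := rfl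

lemma frobSq_outer {n : ℕ} (v w : Fin n → ℂ) :
    ∑ i, ∑ j, normSq (outerPr v w i j)
      = (∑ i, normSq (v i)) * (∑ j, normSq (w j)) := by
  simp only [outerPr_apply, Complex.normSq_mul, Complex.normSq_conj, ← Finset.mul_sum]
  rw [← Finset.sum_mul]

lemma trace_outer {n : ℕ} (v w : Fin n → ℂ) :
    (outerPr v w).trace = ∑ i, v i * (starRingEnd ℂ) (w i) := by
  simp [Matrix.trace, Matrix.diag, outerPr_apply]

lemma frobSq_outer_sub {n : ℕ} (α β : Fin n → ℂ) :
    ∑ i, ∑ j, normSq ((outerPr α α - outerPr β β) i j)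
      = (∑ i, normSq (α i)) * (∑ i, normSq (α i))
        + (∑ i, normSq (β i)) * (∑ i, normSq (β i))
        - 2 * normSq (∑ i, α i * (starRingEnd ℂ) (β i)) := by
  have h1 : ∀ i j : Fin n, normSq ((outerPr α α - outerPr β β) i j)
      = normSq (outerPr α α i j) + normSq (outerPr β β i j)
        - 2 * (outerPr α α i j * (starRingEnd ℂ) (outerPr β β i j)).re := by
    intro i j
    rw [Matrix.sub_apply, Complex.normSq_sub]
  simp only [h1, Finset.sum_sub_distrib, Finset.sum_add_distrib]
  rw [frobSq_outer, frobSq_outer]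
  congr 1
  simp only [← Finset.mul_sum]
  congr 1
  have key : ∑ i : Fin n, ∑ j : Fin n,
      (outerPr α α i j * (starRingEnd ℂ) (outerPr β β i j))
      = (∑ i, α i * (starRingEnd ℂ) (β i)) *
        (starRingEnd ℂ) (∑ i, α i * (starRingEnd ℂ) (β i)) := by
    rw [map_sum, Finset.sum_mul_sum]
    refine Finset.sum_congr rfl fun i _ => Finset.sum_congr rfl fun j _ => ?_
    simp only [outerPr_apply, _root_.map_mul, Complex.conj_conj]
    ring
  have := congrArg Complex.re key
  rw [Complex.re_sum] at this
  simp only [Complex.re_sum] at this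
  rw [this, Complex.mul_conj, Complex.ofReal_re]

lemma cauchy_schwarz_normSq {n : ℕ} (α β : Fin n → ℂ) :
    normSq (∑ i, α i * (starRingEnd ℂ) (β i))
      ≤ (∑ i, normSq (α i)) * (∑ i, normSq (β i)) := by
  have h1 : ‖∑ i, α i * (starRingEnd ℂ) (β i)‖ ≤ ∑ i, ‖α i‖ * ‖β i‖ := by
    refine (norm_sum_le _ _).trans (le_of_eq ?_)
    refine Finset.sum_congr rfl fun i _ => ?_
    rw [norm_mul, RCLike.norm_conj]
  have h2 : (∑ i, ‖α i‖ * ‖β i‖) ^ 2 ≤ (∑ i, ‖α i‖ ^ 2) * (∑ i, ‖β i‖ ^ 2) :=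
    Finset.sum_mul_sq_le_sq_mul_sq _ _ _
  have h3 : normSq (∑ i, α i * (starRingEnd ℂ) (β i))
      = ‖∑ i, α i * (starRingEnd ℂ) (β i)‖ ^ 2 := by
    rw [← Complex.sq_norm]
  have h4 : ∀ γ : Fin n → ℂ, (∑ i, ‖γ i‖ ^ 2) = ∑ i, normSq (γ i) := by
    intro γ; exact Finset.sum_congr rfl fun i _ => by rw [← Complex.sq_norm]
  rw [h3, ← h4, ← h4]
  calc ‖∑ i, α i * (starRingEnd ℂ) (β i)‖ ^ 2
      ≤ (∑ i, ‖α i‖ * ‖β i‖) ^ 2 := by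
        apply pow_le_pow_left₀ (norm_nonneg _) h1
    _ ≤ _ := h2

/-- for `n ≥ 2` there is `c > 0` with
`‖μ₀(Ψ)‖ ≥ c·‖Ψ‖²` for all `Ψ = (α,β) ∈ ℂⁿ ⊕ ℂⁿ` (Frobenius norm). -/
theorem stmt2 (n : ℕ) (hn : 2 ≤ n) :
    ∃ c : ℝ, 0 < c ∧ ∀ α β : Fin n → ℂ,
      c * ((∑ i, ‖α i‖ ^ 2) + ∑ i, ‖β i‖ ^ 2) ≤ frobNorm (mu0 α β) := by
  have hn0 : 0 < n := lt_of_lt_of_le two_pos hn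
  have hnR : (0 : ℝ) < n := by exact_mod_cast hn0
  refine ⟨1/2, by norm_num, fun α β => ?_⟩
  have hnorm : ∀ γ : Fin n → ℂ, (∑ i, ‖γ i‖ ^ 2) = ∑ i, normSq (γ i) := by
    intro γ; exact Finset.sum_congr rfl fun i _ => by rw [← Complex.sq_norm]
  set a : ℝ := ∑ i, normSq (α i) with ha
  set b : ℝ := ∑ i, normSq (β i) with hb
  set t : ℂ := ∑ i, α i * (starRingEnd ℂ) (β i) with ht
  have ha0 : 0 ≤ a := Finset.sum_nonneg fun i _ => normSq_nonneg _
  have hb0 : 0 ≤ b := Finset.sum_nonneg fun i _ => normSq_nonneg _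
  have hcs : normSq t ≤ a * b := cauchy_schwarz_normSq α β
  have ht0 : 0 ≤ normSq t := normSq_nonneg _
  -- compute the Frobenius norm squared of mu0
  have hconjsum : (∑ i, β i * (starRingEnd ℂ) (α i)) = (starRingEnd ℂ) t := by
    rw [ht, map_sum]
    refine Finset.sum_congr rfl fun i _ => ?_
    rw [_root_.map_mul, Complex.conj_conj]; ring
  have hhalf : normSq ((1:ℂ)/2) = 1/4 := by
    have : ((1:ℂ)/2) = ((1/2 : ℝ) : ℂ) := by norm_num
    rw [this, Complex.normSq_ofReal]; norm_num
  have hcast : ∀ γ : Fin n → ℂ, ∑ i, γ i * (starRingEnd ℂ) (γ i)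
      = ((∑ i, normSq (γ i) : ℝ) : ℂ) := by
    intro γ
    simp only [Complex.mul_conj]
    push_cast
    rfl
  have htr1 : (outerPr α α - outerPr β β).trace = ((a - b : ℝ) : ℂ) := by
    rw [Matrix.trace_sub, trace_outer, trace_outer, hcast, hcast, ha, hb]
    push_cast; ring
  have htr1' : (outerPr β β - outerPr α α).trace = ((b - a : ℝ) : ℂ) := by
    rw [Matrix.trace_sub, trace_outer, trace_outer, hcast, hcast, ha, hb]
    push_cast; ring
  have hsmul : ∀ (X : Matrix (Fin n) (Fin n) ℂ),
      ∑ i, ∑ j, normSq ((((1:ℂ)/2) • X) i j) = (1/4) * ∑ i, ∑ j, normSq (X i j) := by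
    intro X
    have : ∀ i j, normSq ((((1:ℂ)/2) • X) i j) = (1/4) * normSq (X i j) := by
      intro i j
      rw [Matrix.smul_apply, smul_eq_mul, Complex.normSq_mul, hhalf]
    simp only [this, ← Finset.mul_sum]
  have hS : ∑ i, ∑ j, normSq (mu0 α β i j)
      = (1/2) * ((a*a + b*b - 2*normSq t) - (a-b)^2 / n) + 2 * (a*b - normSq t / n) := by
    rw [mu0, frobSq_fromBlocks, hsmul, hsmul, frobSq_traceFree hn0, frobSq_traceFree hn0,
      frobSq_traceFree hn0, frobSq_traceFree hn0, frobSq_outer_sub, frobSq_outer_sub,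
      frobSq_outer, frobSq_outer, htr1, htr1', trace_outer, trace_outer, hconjsum,
      ← ht, Complex.normSq_conj, Complex.normSq_ofReal, Complex.normSq_ofReal,
      ← ha, ← hb]
    ring
  have hfin : frobNorm (mu0 α β) = Real.sqrt (∑ i, ∑ j, normSq (mu0 α β i j)) := by
    unfold frobNorm
    congr 1
    refine Finset.sum_congr rfl fun i _ => Finset.sum_congr rfl fun j _ => ?_
    rw [← Complex.sq_norm]
  rw [hnorm, hnorm, ← ha, ← hb, hfin]
  have hkey : (1/2 * (a + b)) ^ 2 ≤ ∑ i, ∑ j, normSq (mu0 α β i j) := by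
    rw [hS]
    have h2n : (2:ℝ) ≤ n := by exact_mod_cast hn
    have hinv : (n : ℝ)⁻¹ ≤ 1/2 := by
      rw [show (1:ℝ)/2 = (2:ℝ)⁻¹ by norm_num]
      exact inv_anti₀ (by norm_num) h2n
    have hinv0 : (0:ℝ) < (n : ℝ)⁻¹ := by positivity
    simp only [div_eq_mul_inv]
    nlinarith [mul_nonneg (sub_nonneg.mpr hcs) (le_of_lt hinv0), sq_nonneg (a+b), sub_nonneg.mpr hcs,
      mul_nonneg (sq_nonneg (a+b)) (sub_nonneg.mpr hinv), sq_nonneg (a-b),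
      mul_nonneg (sq_nonneg (a-b)) (le_of_lt hinv0)]
  calc 1/2 * (a + b) = Real.sqrt ((1/2 * (a+b))^2) := by
        rw [Real.sqrt_sq (by positivity)]
    _ ≤ _ := Real.sqrt_le_sqrt hkey
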